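/- Let g : [0,∞)^d → [0,∞) be continuous and positively 1-homogeneous. For nonempty C ⊆ D = {1,…,d} and δ ∈ [0,1], let B^1_{C,δ} = ∪_{i∈C} {x ∈ ℝ_+^d : x_i = 1, x_j ≥ 1 ∀ j ∈ C∖{i}, x_k ≤ δ ∀ k ∈ D∖C} and B^δ_{C,δ} = ∪_{i∈D∖C} {x ∈ ℝ_+^d : x_i = δ, x_j ≤ δ ∀ j ∈ (D∖C)∖{i}, x_k ≥ 1 ∀ k ∈ C}. Then min over B^1_{C,δ} ∪ B^δ_{C,δ} of g equals min over B^1_{C,δ} of g; specifically, for every x̃ ∈ B^δ_{C,δ} one has g(x̃) ≥ min_{y ∈ B^1_{C,δ}} g(y), because g(x̃) = x̃_l g(x̃/x̃_l) with x̃_l = min_{k∈C} x̃_k ≥ 1 and x̃/x̃_l ∈ B^1_{C,δ}. -/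

import Mathlib

open Filter Topology

/-- The part `B¹_{C,δ}` of the boundary of `R_{C,δ}` where some coordinate in `C` equals 1. -/
def Bone {d : ℕ} (C : Finset (Fin d)) (δ : ℝ) : Set (Fin d → ℝ) :=
  ⋃ i ∈ C, {x : Fin d → ℝ | (∀ j, 0 ≤ x j) ∧ x i = 1 ∧
    (∀ j ∈ C, j ≠ i → 1 ≤ x j) ∧ ∀ k ∉ C, x k ≤ δ}

/-- The part `B^δ_{C,δ}` of the boundary of `R_{C,δ}` where some coordinate outside `C`
equals `δ`. -/
def Bdelta {d : ℕ} (C : Finset (Fin d)) (δ : ℝ) : Set (Fin d → ℝ) :=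
  ⋃ i ∈ Cᶜ, {x : Fin d → ℝ | (∀ j, 0 ≤ x j) ∧ x i = δ ∧
    (∀ j ∉ C, j ≠ i → x j ≤ δ) ∧ ∀ k ∈ C, 1 ≤ x k}

/-- part of the proof of Proposition 11: for a continuous, positively
`1`-homogeneous gauge function `g` (bounding the coordinates on the positive orthant),
the minimum of `g` over `B¹_{C,δ} ∪ B^δ_{C,δ}` equals the minimum over `B¹_{C,δ}`;
specifically every `x̃ ∈ B^δ_{C,δ}` satisfies `g(x̃) ≥ min_{y ∈ B¹_{C,δ}} g(y)`,
because `g(x̃) = x̃ₗ g(x̃ / x̃ₗ)` with `x̃ₗ = min_{k ∈ C} x̃ₖ ≥ 1` and `x̃ / x̃ₗ ∈ B¹_{C,δ}`. -/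
theorem min_union_boundary_eq_min_Bone
    {d : ℕ} (hd : 0 < d)
    (g : (Fin d → ℝ) → ℝ) (hgcont : Continuous g)
    (hghomog : ∀ t : ℝ, 0 < t → ∀ x, g (t • x) = t * g x)
    (hgmax : ∀ x : Fin d → ℝ, (∀ j, 0 ≤ x j) → ∀ j, x j ≤ g x)
    (C : Finset (Fin d)) (hC : C.Nonempty)
    (δ : ℝ) (hδ0 : 0 ≤ δ) (hδ1 : δ ≤ 1) :
    sInf (g '' (Bone C δ ∪ Bdelta C δ)) = sInf (g '' Bone C δ) ∧
    ∀ x ∈ Bdelta C δ, sInf (g '' Bone C δ) ≤ g x := by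

  classical
  -- g is nonnegative on nonnegative vectors
  have hg0 : ∀ x : Fin d → ℝ, (∀ j, 0 ≤ x j) → 0 ≤ g x := fun x hx =>
    le_trans (hx ⟨0, hd⟩) (hgmax x hx ⟨0, hd⟩)
  -- a canonical element of Bone
  obtain ⟨i0, hi0⟩ := hC
  have hx0mem : (fun j => if j ∈ C then (1:ℝ) else 0) ∈ Bone C δ := by
    simp only [Bone, Set.mem_iUnion, Set.mem_setOf_eq]
    refine ⟨i0, hi0, fun j => by split <;> norm_num, by simp [hi0],
      fun j hj _ => by simp [hj], fun k hk => by simp [hk, hδ0]⟩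
  -- every element of Bone has nonneg coordinates and a coordinate equal to 1
  have hBone_nonneg : ∀ y ∈ Bone C δ, (∀ j, 0 ≤ y j) := by
    intro y hy
    simp only [Bone, Set.mem_iUnion, Set.mem_setOf_eq] at hy
    obtain ⟨i, _, h1, _⟩ := hy
    exact h1
  have hBdelta_nonneg : ∀ y ∈ Bdelta C δ, (∀ j, 0 ≤ y j) := by
    intro y hy
    simp only [Bdelta, Set.mem_iUnion, Set.mem_setOf_eq] at hy
    obtain ⟨i, _, h1, _⟩ := hy
    exact h1
  have hbddU : BddBelow (g '' (Bone C δ ∪ Bdelta C δ)) := by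
    refine ⟨0, fun b hb => ?_⟩
    obtain ⟨x, hx, rfl⟩ := hb
    rcases hx with hx | hx
    · exact hg0 x (hBone_nonneg x hx)
    · exact hg0 x (hBdelta_nonneg x hx)
  have hbdd1 : BddBelow (g '' Bone C δ) := by
    refine ⟨0, fun b hb => ?_⟩
    obtain ⟨x, hx, rfl⟩ := hb
    exact hg0 x (hBone_nonneg x hx)
  -- key step
  have key : ∀ x ∈ Bdelta C δ, sInf (g '' Bone C δ) ≤ g x := by
    intro x hx
    simp only [Bdelta, Set.mem_iUnion, Set.mem_setOf_eq] at hx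
    obtain ⟨i, hiC, hxnn, hxi, hxout, hxin⟩ := hx
    obtain ⟨l, hlC, hlmin⟩ := C.exists_min_image x ⟨i0, hi0⟩
    have ht1 : 1 ≤ x l := hxin l hlC
    have ht0 : 0 < x l := lt_of_lt_of_le one_pos ht1
    set y : Fin d → ℝ := (x l)⁻¹ • x with hy
    have hymem : y ∈ Bone C δ := by
      simp only [Bone, Set.mem_iUnion, Set.mem_setOf_eq]
      refine ⟨l, hlC, fun j => mul_nonneg (inv_nonneg.2 ht0.le) (hxnn j),
        inv_mul_cancel₀ ht0.ne', fun j hj _ => ?_, fun k hk => ?_⟩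
      · have := hlmin j hj
        calc (1:ℝ) = (x l)⁻¹ * x l := (inv_mul_cancel₀ ht0.ne').symm
          _ ≤ (x l)⁻¹ * x j := by
              exact mul_le_mul_of_nonneg_left this (inv_nonneg.2 ht0.le)
      · have hxk : x k ≤ δ := by
          by_cases hki : k = i
          · subst hki; exact le_of_eq hxi
          · exact hxout k hk hki
        calc (x l)⁻¹ * x k ≤ (x l)⁻¹ * δ :=
              mul_le_mul_of_nonneg_left hxk (inv_nonneg.2 ht0.le)
          _ ≤ 1 * δ := mul_le_mul_of_nonneg_right (inv_le_one_of_one_le₀ ht1) hδ0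
          _ = δ := one_mul δ
    have hgy : g x = x l * g y := by
      have hxy : x l • y = x := by
        rw [hy, smul_smul, mul_inv_cancel₀ ht0.ne', one_smul]
      calc g x = g (x l • y) := by rw [hxy]
        _ = x l * g y := hghomog (x l) ht0 y
    have hgy0 : 0 ≤ g y := hg0 y (hBone_nonneg y hymem)
    have h1 : sInf (g '' Bone C δ) ≤ g y := csInf_le hbdd1 ⟨y, hymem, rfl⟩
    have h2 : g y ≤ x l * g y := le_mul_of_one_le_left hgy0 ht1
    linarith
  constructor
  · apply le_antisymm
    · exact csInf_le_csInf hbddU ⟨_, _, hx0mem, rfl⟩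
        (Set.image_mono (f := _) Set.subset_union_left)
    · refine le_csInf ⟨g _, Set.mem_image_of_mem g (Set.mem_union_left _ hx0mem)⟩ ?_
      rintro b ⟨x, hx | hx, rfl⟩
      · exact csInf_le hbdd1 ⟨x, hx, rfl⟩
      · exact key x hx
  · exact key
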